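/- For all σ ∈ (0,1), n ≥ 1, and 0 < r < 1, the integral ∫_0^1 t (t^{1/(2σ)} + r)^{-(n+2σ)} dt is comparable to r^{-(n−2σ)}, with implied constants depending only on n and σ (assuming n > 2σ). -/

import Mathlib

open Real MeasureTheory

section
open intervalIntegral
private theorem my_integral_id {a b : ℝ} : ∫ x in a..b, x = (b ^ 2 - a ^ 2) / 2 :=
  integral_id
private theorem my_integral_rpow {a b r : ℝ}
    (h : -1 < r ∨ r ≠ -1 ∧ (0:ℝ) ∉ Set.uIcc a b) :
    ∫ x in a..b, x ^ r = (b ^ (r + 1) - a ^ (r + 1)) / (r + 1) :=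
  integral_rpow h
end

theorem stmt9 (n : ℕ) (σ : ℝ) (hn : 1 ≤ n) (hσ : 0 < σ) (hσ1 : σ < 1)
    (hnσ : 2 * σ < (n : ℝ)) :
    ∃ C > 0, ∀ r : ℝ, 0 < r → r < 1 →
      C⁻¹ * r ^ (-((n : ℝ) - 2 * σ)) ≤
        (∫ t in Set.Ioc (0:ℝ) 1, t * (t ^ (1 / (2 * σ)) + r) ^ (-((n : ℝ) + 2 * σ))) ∧
      (∫ t in Set.Ioc (0:ℝ) 1, t * (t ^ (1 / (2 * σ)) + r) ^ (-((n : ℝ) + 2 * σ))) ≤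
        C * r ^ (-((n : ℝ) - 2 * σ)) := by
  have h2σ : (0:ℝ) < 2 * σ := by linarith
  have hq : (0:ℝ) < (n:ℝ) - 2 * σ := by linarith
  set A : ℝ := 1/2 + 2*σ/((n:ℝ) - 2*σ) with hA
  set B : ℝ := 2 ^ (-((n:ℝ) + 2*σ)) / 2 with hB
  have hApos : 0 < A := by positivity
  have hBpos : 0 < B := by positivity
  refine ⟨A + B⁻¹, by positivity, fun r hr hr1 => ?_⟩
  set p : ℝ := (n:ℝ) + 2*σ with hp
  set e : ℝ := 1/(2*σ) with he
  have hepos : 0 < e := by positivity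
  have hppos : 0 < p := by positivity
  set f : ℝ → ℝ := fun t => t * (t ^ e + r) ^ (-p) with hf
  set s : ℝ := r ^ (2*σ) with hs
  have hs0 : 0 < s := Real.rpow_pos_of_pos hr _
  have hs1 : s ≤ 1 := Real.rpow_le_one hr.le hr1.le h2σ.le
  have hse : s ^ e = r := by
    rw [hs, ← Real.rpow_mul hr.le, show (2*σ)*e = 1 by rw [he]; field_simp,
      Real.rpow_one]
  -- continuity of f on [0,1]
  have hcont : ContinuousOn f (Set.Icc 0 1) := by
    intro t ht
    have h1 : ContinuousAt (fun x : ℝ => x ^ e + r) t :=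
      (Real.continuousAt_rpow_const t e (Or.inr hepos.le)).add continuousAt_const
    have hpos : (0:ℝ) < t ^ e + r := by
      have := Real.rpow_nonneg ht.1 e
      linarith
    have h2 : ContinuousAt (fun x : ℝ => (x ^ e + r) ^ (-p)) t :=
      h1.rpow_const (Or.inl (ne_of_gt hpos))
    exact (continuousAt_id.mul h2).continuousWithinAt
  have hInt : IntegrableOn f (Set.Ioc 0 1) :=
    (hcont.integrableOn_Icc).mono_set Set.Ioc_subset_Icc_self
  have hI1 : IntervalIntegrable f volume 0 s :=
    (intervalIntegrable_iff_integrableOn_Ioc_of_le hs0.le).2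
      (hInt.mono_set (Set.Ioc_subset_Ioc le_rfl hs1))
  have hI2 : IntervalIntegrable f volume s 1 :=
    (intervalIntegrable_iff_integrableOn_Ioc_of_le hs1).2
      (hInt.mono_set (Set.Ioc_subset_Ioc hs0.le le_rfl))
  have hkey1 : s * s * r ^ (-p) = r ^ (-((n:ℝ) - 2*σ)) := by
    rw [hs, ← Real.rpow_add hr, ← Real.rpow_add hr]
    congr 1; rw [hp]; ring
  have hrq : (0:ℝ) ≤ r ^ (-((n:ℝ) - 2*σ)) := Real.rpow_nonneg hr.le _
  constructor
  · -- Lower bound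
    have hmono : (∫ t in Set.Ioc (0:ℝ) s, f t) ≤ ∫ t in Set.Ioc (0:ℝ) 1, f t := by
      apply setIntegral_mono_set hInt
      · refine (ae_restrict_iff' measurableSet_Ioc).2 (Filter.Eventually.of_forall
          fun t ht => ?_)
        have hpos : (0:ℝ) < t ^ e + r := by
          have := Real.rpow_nonneg ht.1.le e; linarith
        exact mul_nonneg ht.1.le (Real.rpow_nonneg hpos.le _)
      · exact (Set.Ioc_subset_Ioc le_rfl hs1).eventuallyLE
    have hlow : (∫ t in Set.Ioc (0:ℝ) s, (fun t => t * ((2*r) ^ (-p))) t)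
        ≤ ∫ t in Set.Ioc (0:ℝ) s, f t := by
      apply setIntegral_mono_on
      · exact (continuous_id.mul continuous_const).integrableOn_Ioc
      · exact hInt.mono_set (Set.Ioc_subset_Ioc le_rfl hs1)
      · exact measurableSet_Ioc
      · intro t ht
        have hte : t ^ e ≤ r := by
          rw [← hse]; exact Real.rpow_le_rpow ht.1.le ht.2 hepos.le
        have hpos : (0:ℝ) < t ^ e + r := by
          have := Real.rpow_nonneg ht.1.le e; linarith
        have hle : (2*r) ^ (-p) ≤ (t ^ e + r) ^ (-p) :=
          Real.rpow_le_rpow_of_nonpos hpos (by linarith) (by linarith)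
        exact mul_le_mul_of_nonneg_left hle ht.1.le
    have hval : (∫ t in Set.Ioc (0:ℝ) s, (fun t => t * ((2*r) ^ (-p))) t)
        = B * r ^ (-((n:ℝ) - 2*σ)) := by
      rw [← intervalIntegral.integral_of_le hs0.le, intervalIntegral.integral_mul_const,
        my_integral_id, Real.mul_rpow (by norm_num) hr.le]
      rw [← hkey1, hB]; ring
    have hCinv : (A + B⁻¹)⁻¹ ≤ B :=
      (inv_le_comm₀ (by positivity) hBpos).2 (le_add_of_nonneg_left hApos.le)
    calc (A + B⁻¹)⁻¹ * r ^ (-((n:ℝ) - 2*σ)) ≤ B * r ^ (-((n:ℝ) - 2*σ)) :=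
          mul_le_mul_of_nonneg_right hCinv hrq
      _ = _ := hval.symm
      _ ≤ _ := hlow
      _ ≤ _ := hmono
  · -- Upper bound
    have hsplit : (∫ t in Set.Ioc (0:ℝ) 1, f t)
        = (∫ t in (0:ℝ)..s, f t) + ∫ t in s..(1:ℝ), f t := by
      rw [intervalIntegral.integral_add_adjacent_intervals hI1 hI2,
        intervalIntegral.integral_of_le (by norm_num : (0:ℝ) ≤ 1)]
    -- piece 1
    have hub1 : (∫ t in (0:ℝ)..s, f t) ≤ 1/2 * r ^ (-((n:ℝ) - 2*σ)) := by
      have h1 : (∫ t in (0:ℝ)..s, f t) ≤ ∫ t in (0:ℝ)..s, t * (r ^ (-p)) := by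
        apply intervalIntegral.integral_mono_on hs0.le hI1
        · exact (continuous_id.mul continuous_const).intervalIntegrable _ _
        · intro t ht
          have h0 : (0:ℝ) ≤ t ^ e := Real.rpow_nonneg ht.1 e
          have hle : (t ^ e + r) ^ (-p) ≤ r ^ (-p) :=
            Real.rpow_le_rpow_of_nonpos hr (by linarith) (by linarith)
          exact mul_le_mul_of_nonneg_left hle ht.1
      have h2 : (∫ t in (0:ℝ)..s, t * (r ^ (-p))) = 1/2 * r ^ (-((n:ℝ) - 2*σ)) := by
        rw [intervalIntegral.integral_mul_const, my_integral_id, ← hkey1]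
        ring
      linarith
    -- piece 2
    set c : ℝ := 1 + e * (-p) with hcdef
    have hc : c = -((n:ℝ))/(2*σ) := by
      rw [hcdef, he, hp]; field_simp; ring
    have hclt : c < -1 := by
      rw [hc, div_lt_iff₀ h2σ]; linarith
    have hc1neg : c + 1 < 0 := by linarith
    have hS : s ^ (c+1) = r ^ (-((n:ℝ) - 2*σ)) := by
      rw [hs, ← Real.rpow_mul hr.le]
      congr 1
      rw [hc]; field_simp; ring
    have hub2 : (∫ t in s..(1:ℝ), f t) ≤ 2*σ/((n:ℝ) - 2*σ) * r ^ (-((n:ℝ) - 2*σ)) := by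
      have h1 : (∫ t in s..(1:ℝ), f t) ≤ ∫ t in s..(1:ℝ), t ^ c := by
        apply intervalIntegral.integral_mono_on hs1 hI2
        · apply ContinuousOn.intervalIntegrable
          intro t ht
          rw [Set.uIcc_of_le hs1] at ht
          exact (Real.continuousAt_rpow_const t c
            (Or.inl (ne_of_gt (lt_of_lt_of_le hs0 ht.1)))).continuousWithinAt
        · intro t ht
          have ht0 : 0 < t := lt_of_lt_of_le hs0 ht.1
          have hte : 0 < t ^ e := Real.rpow_pos_of_pos ht0 e
          have hle : (t ^ e + r) ^ (-p) ≤ (t ^ e) ^ (-p) :=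
            Real.rpow_le_rpow_of_nonpos hte (by linarith) (by linarith)
          calc t * (t ^ e + r) ^ (-p) ≤ t * (t ^ e) ^ (-p) :=
                mul_le_mul_of_nonneg_left hle ht0.le
            _ = t ^ c := by
                rw [← Real.rpow_mul ht0.le, hcdef, Real.rpow_add ht0, Real.rpow_one]
      have h2 : (∫ t in s..(1:ℝ), t ^ c) = (1 - s ^ (c+1)) / (c+1) := by
        rw [my_integral_rpow (Or.inr ⟨by linarith, by
          rw [Set.uIcc_of_le hs1]; intro h; exact absurd h.1 (not_le.2 hs0)⟩)]
        rw [Real.one_rpow]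
      have h3 : (1 - s ^ (c+1)) / (c+1) ≤ 2*σ/((n:ℝ) - 2*σ) * s ^ (c+1) := by
        rw [div_le_iff_of_neg hc1neg]
        have hc1 : c + 1 = -(((n:ℝ) - 2*σ)/(2*σ)) := by
          rw [hc]; field_simp; ring
        have hSpos : 0 < s ^ (c+1) := Real.rpow_pos_of_pos hs0 _
        have : 2*σ/((n:ℝ) - 2*σ) * s ^ (c+1) * (c+1) = -(s ^ (c+1)) := by
          rw [hc1]; field_simp
        rw [this]; linarith
      rw [← hS]; linarith
    have hBinv : 0 ≤ B⁻¹ * r ^ (-((n:ℝ) - 2*σ)) := by positivity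
    rw [hsplit]
    calc (∫ t in (0:ℝ)..s, f t) + ∫ t in s..(1:ℝ), f t
        ≤ 1/2 * r ^ (-((n:ℝ) - 2*σ)) + 2*σ/((n:ℝ) - 2*σ) * r ^ (-((n:ℝ) - 2*σ)) := by
          linarith
      _ = A * r ^ (-((n:ℝ) - 2*σ)) := by rw [hA]; ring
      _ ≤ (A + B⁻¹) * r ^ (-((n:ℝ) - 2*σ)) := by nlinarith
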